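/- Let μ > 0, p ∈ ℕ and 0 < β₁ < β₂, and set I = (μ² + π²(1+p)²/4, μ² + π²(2+p)²/4). Suppose Λ₁, Λ₂ and Λ^D all lie in I, that for i = 1,2, writing sᵢ = √(Λᵢ − μ²), one has [βᵢ·sᵢ·sin sᵢ·cosh μ + (Λᵢ·cosh μ + βᵢ·μ·sinh μ)·cos sᵢ]·[βᵢ·sᵢ·cos sᵢ·sinh μ − (Λᵢ·sinh μ + βᵢ·μ·cosh μ)·sin sᵢ] = 0, and that, writing s^D = √(Λ^D − μ²), one has [s^D·sin s^D·cosh μ + μ·sinh μ·cos s^D]·[s^D·cos s^D·sinh μ − μ·cosh μ·sin s^D] = 0. Then Λ₁ < Λ₂ < Λ^D. -/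

import Mathlib

open Real

namespace Stmt5Aux

/-- On the interval `((1+p)π/2, (2+p)π/2)` the cosine does not vanish. -/
lemma cos_ne {x : ℝ} (p : ℕ) (h1 : (1 + (p : ℝ)) * π / 2 < x)
    (h2 : x < (2 + (p : ℝ)) * π / 2) : Real.cos x ≠ 0 := by
  intro h
  rcases Real.cos_eq_zero_iff.1 h with ⟨k, hk⟩
  subst hk
  have hπ := Real.pi_pos
  have hA : ((p : ℝ)) + 1 < 2 * (k : ℝ) + 1 := by nlinarith
  have hB : (2 * (k : ℝ) + 1) < (p : ℝ) + 2 := by nlinarith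
  have hA' : (p : ℤ) + 1 < 2 * k + 1 := by exact_mod_cast hA
  have hB' : (2 * k + 1 : ℤ) < (p : ℤ) + 2 := by exact_mod_cast hB
  omega

/-- On the interval `((1+p)π/2, (2+p)π/2)` the sine does not vanish. -/
lemma sin_ne {x : ℝ} (p : ℕ) (h1 : (1 + (p : ℝ)) * π / 2 < x)
    (h2 : x < (2 + (p : ℝ)) * π / 2) : Real.sin x ≠ 0 := by
  intro h
  rcases Real.sin_eq_zero_iff.1 h with ⟨n, hn⟩
  rw [← hn] at h1 h2
  have hπ := Real.pi_pos
  have hA : ((p : ℝ)) + 1 < 2 * (n : ℝ) := by nlinarith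
  have hB : 2 * (n : ℝ) < (p : ℝ) + 2 := by nlinarith
  have hA' : (p : ℤ) + 1 < 2 * n := by exact_mod_cast hA
  have hB' : (2 * n : ℤ) < (p : ℤ) + 2 := by exact_mod_cast hB
  omega

/-- Sign of `sin x * cos x` in the "even p" case. -/
lemma sc_neg {x : ℝ} (m : ℕ) (h1 : (1 + 2 * (m : ℝ)) * π / 2 < x)
    (h2 : x < (2 + 2 * (m : ℝ)) * π / 2) : Real.sin x * Real.cos x < 0 := by
  have hπ := Real.pi_pos
  have h2m : Real.sin (2 * x) = 2 * (Real.sin x * Real.cos x) := by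
    rw [Real.sin_two_mul]; ring
  have hper := Real.sin_add_int_mul_two_pi (2 * x - (m : ℝ) * (2 * π)) (m : ℤ)
  set y := 2 * x - (m : ℝ) * (2 * π) with hy
  have hkey : Real.sin (2 * x) = Real.sin y := by
    rw [← hper]; congr 1; push_cast; ring
  have hy1 : π < y := by nlinarith
  have hy2 : y < 2 * π := by nlinarith
  have hsy : Real.sin y < 0 := by
    have h3 : Real.sin ((y - π) + π) = -Real.sin (y - π) := Real.sin_add_pi _
    have h4 : 0 < Real.sin (y - π) :=
      Real.sin_pos_of_pos_of_lt_pi (by linarith) (by linarith)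
    have h5 : (y - π) + π = y := by ring
    rw [h5] at h3
    linarith
  have : Real.sin (2 * x) < 0 := by rw [hkey]; exact hsy
  linarith [h2m ▸ this]

/-- Sign of `sin x * cos x` in the "odd p" case. -/
lemma sc_pos {x : ℝ} (m : ℕ) (h1 : (2 + 2 * (m : ℝ)) * π / 2 < x)
    (h2 : x < (3 + 2 * (m : ℝ)) * π / 2) : 0 < Real.sin x * Real.cos x := by
  have hπ := Real.pi_pos
  have h2m : Real.sin (2 * x) = 2 * (Real.sin x * Real.cos x) := by
    rw [Real.sin_two_mul]; ring
  have hper := Real.sin_add_int_mul_two_pi (2 * x - ((m : ℝ) + 1) * (2 * π)) ((m : ℤ) + 1)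
  set y := 2 * x - ((m : ℝ) + 1) * (2 * π) with hy
  have hkey : Real.sin (2 * x) = Real.sin y := by
    rw [← hper]; congr 1; push_cast; ring
  have hy1 : 0 < y := by nlinarith
  have hy2 : y < π := by nlinarith
  have hsy : 0 < Real.sin y := Real.sin_pos_of_pos_of_lt_pi hy1 hy2
  have : 0 < Real.sin (2 * x) := by rw [hkey]; exact hsy
  linarith [h2m ▸ this]

/-- `x * tan x` is strictly increasing on the relevant interval. -/
lemma monoEven (p : ℕ) : StrictMonoOn (fun x => x * Real.tan x)
    (Set.Ioo ((1 + (p : ℝ)) * π / 2) ((2 + (p : ℝ)) * π / 2)) := by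
  apply strictMonoOn_of_deriv_pos (convex_Ioo _ _)
  · intro x hx
    exact ((hasDerivAt_id x).mul
      (Real.hasDerivAt_tan (cos_ne p hx.1 hx.2))).differentiableAt.continuousAt.continuousWithinAt
  · rw [interior_Ioo]
    intro x hx
    have hc := cos_ne p hx.1 hx.2
    have hd : HasDerivAt (fun x => x * Real.tan x)
        (1 * Real.tan x + x * (1 / Real.cos x ^ 2)) x :=
      (hasDerivAt_id x).mul (Real.hasDerivAt_tan hc)
    rw [hd.deriv]
    have hπ3 := Real.pi_gt_three
    have hp0 : (0 : ℝ) ≤ p := Nat.cast_nonneg p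
    have hx1 : (1 : ℝ) < x := by nlinarith [hx.1]
    have hc2 : 0 < Real.cos x ^ 2 := pow_two_pos_of_ne_zero hc
    have key : 1 * Real.tan x + x * (1 / Real.cos x ^ 2) =
        (Real.sin x * Real.cos x + x) / Real.cos x ^ 2 := by
      rw [Real.tan_eq_sin_div_cos]
      field_simp
    rw [key]
    apply div_pos _ hc2
    nlinarith [Real.neg_one_le_sin x, Real.sin_le_one x, Real.neg_one_le_cos x,
      Real.cos_le_one x]

/-- `-(x * cot x)` is strictly increasing on the relevant interval. -/
lemma monoOdd (p : ℕ) : StrictMonoOn (fun x => -(x * (Real.cos x / Real.sin x)))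
    (Set.Ioo ((1 + (p : ℝ)) * π / 2) ((2 + (p : ℝ)) * π / 2)) := by
  have hder : ∀ x ∈ Set.Ioo ((1 + (p : ℝ)) * π / 2) ((2 + (p : ℝ)) * π / 2),
      HasDerivAt (fun x => -(x * (Real.cos x / Real.sin x)))
        (-(1 * (Real.cos x / Real.sin x) +
          x * ((-Real.sin x * Real.sin x - Real.cos x * Real.cos x) / Real.sin x ^ 2))) x := by
    intro x hx
    have hs := sin_ne p hx.1 hx.2
    exact ((hasDerivAt_id x).mul
      ((Real.hasDerivAt_cos x).div (Real.hasDerivAt_sin x) hs)).neg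
  apply strictMonoOn_of_deriv_pos (convex_Ioo _ _)
  · intro x hx
    exact (hder x hx).differentiableAt.continuousAt.continuousWithinAt
  · rw [interior_Ioo]
    intro x hx
    have hs := sin_ne p hx.1 hx.2
    rw [(hder x hx).deriv]
    have hπ3 := Real.pi_gt_three
    have hp0 : (0 : ℝ) ≤ p := Nat.cast_nonneg p
    have hx1 : (1 : ℝ) < x := by nlinarith [hx.1]
    have hs2 : 0 < Real.sin x ^ 2 := pow_two_pos_of_ne_zero hs
    have pyth := Real.sin_sq_add_cos_sq x
    have key : -(1 * (Real.cos x / Real.sin x) +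
        x * ((-Real.sin x * Real.sin x - Real.cos x * Real.cos x) / Real.sin x ^ 2)) =
        (x - Real.sin x * Real.cos x) / Real.sin x ^ 2 := by
      field_simp
      linear_combination x * pyth
    rw [key]
    apply div_pos _ hs2
    nlinarith [Real.neg_one_le_sin x, Real.sin_le_one x, Real.neg_one_le_cos x,
      Real.cos_le_one x]

/-- Monotone comparison of roots of `F s + c + (s² + μ²) t = 0` as `t` decreases. -/
lemma compare_aux {F : ℝ → ℝ} {S : Set ℝ} (hF : StrictMonoOn F S) {μ c s₁ s₂ t₁ t₂ : ℝ}
    (hs₁ : s₁ ∈ S) (hs₂ : s₂ ∈ S) (h01 : 0 < s₁) (h02 : 0 < s₂) (hμ : 0 < μ)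
    (ht : t₂ < t₁) (ht₂ : 0 ≤ t₂)
    (h₁ : F s₁ + c + (s₁ ^ 2 + μ ^ 2) * t₁ = 0)
    (h₂ : F s₂ + c + (s₂ ^ 2 + μ ^ 2) * t₂ = 0) : s₁ < s₂ := by
  by_contra hcon
  push_neg at hcon
  have hFle : F s₂ ≤ F s₁ := hF.monotoneOn hs₂ hs₁ hcon
  have hh1 : (s₂ ^ 2 + μ ^ 2) * t₂ ≤ (s₁ ^ 2 + μ ^ 2) * t₂ := by
    nlinarith [mul_nonneg (mul_nonneg (sub_nonneg.2 hcon)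
      (by linarith : (0 : ℝ) ≤ s₁ + s₂)) ht₂]
  have hh2 : (s₁ ^ 2 + μ ^ 2) * t₂ < (s₁ ^ 2 + μ ^ 2) * t₁ :=
    mul_lt_mul_of_pos_left ht (by positivity)
  linarith

/-- Extract the normalized equation in the even case. -/
lemma helperEven {μ s Λ t : ℝ} (hμ : 0 < μ) (hs0 : 0 < s) (hΛ : Λ = s ^ 2 + μ ^ 2)
    (ht : 0 ≤ t) (hc : Real.cos s ≠ 0) (hsc : Real.sin s * Real.cos s < 0)
    (he : (s * Real.sin s * Real.cosh μ + (Λ * t * Real.cosh μ + μ * Real.sinh μ) * Real.cos s) *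
      (s * Real.cos s * Real.sinh μ - (Λ * t * Real.sinh μ + μ * Real.cosh μ) * Real.sin s) = 0) :
    s * Real.tan s + μ * Real.tanh μ + (s ^ 2 + μ ^ 2) * t = 0 := by
  have hsh : 0 < Real.sinh μ := Real.sinh_pos_iff.2 hμ
  have hch : 0 < Real.cosh μ := Real.cosh_pos μ
  have hΛpos : 0 < Λ := by nlinarith
  have hf2neg : Real.sin s *
      (s * Real.cos s * Real.sinh μ - (Λ * t * Real.sinh μ + μ * Real.cosh μ) * Real.sin s) < 0 := by
    nlinarith [mul_pos hs0 hsh, sq_nonneg (Real.sin s),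
      mul_nonneg (mul_nonneg (mul_nonneg hΛpos.le ht) hsh.le) (sq_nonneg (Real.sin s)),
      mul_pos hμ hch]
  have hf2 : s * Real.cos s * Real.sinh μ -
      (Λ * t * Real.sinh μ + μ * Real.cosh μ) * Real.sin s ≠ 0 := by
    intro h0
    rw [h0, mul_zero] at hf2neg
    exact lt_irrefl 0 hf2neg
  have hf1 : s * Real.sin s * Real.cosh μ +
      (Λ * t * Real.cosh μ + μ * Real.sinh μ) * Real.cos s = 0 :=
    (mul_eq_zero.1 he).resolve_right hf2
  have hid : Real.cos s * Real.cosh μ *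
      (s * Real.tan s + μ * Real.tanh μ + (s ^ 2 + μ ^ 2) * t) =
      s * Real.sin s * Real.cosh μ + (Λ * t * Real.cosh μ + μ * Real.sinh μ) * Real.cos s := by
    rw [Real.tan_eq_sin_div_cos, Real.tanh_eq_sinh_div_cosh, hΛ]
    field_simp
    ring
  have h0 : Real.cos s * Real.cosh μ *
      (s * Real.tan s + μ * Real.tanh μ + (s ^ 2 + μ ^ 2) * t) = 0 := hid.trans hf1
  exact (mul_eq_zero.1 h0).resolve_left (mul_ne_zero hc hch.ne')

/-- Extract the normalized equation in the odd case. -/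
lemma helperOdd {μ s Λ t : ℝ} (hμ : 0 < μ) (hs0 : 0 < s) (hΛ : Λ = s ^ 2 + μ ^ 2)
    (ht : 0 ≤ t) (hs : Real.sin s ≠ 0) (hsc : 0 < Real.sin s * Real.cos s)
    (he : (s * Real.sin s * Real.cosh μ + (Λ * t * Real.cosh μ + μ * Real.sinh μ) * Real.cos s) *
      (s * Real.cos s * Real.sinh μ - (Λ * t * Real.sinh μ + μ * Real.cosh μ) * Real.sin s) = 0) :
    -(s * (Real.cos s / Real.sin s)) + μ * (Real.cosh μ / Real.sinh μ) +
      (s ^ 2 + μ ^ 2) * t = 0 := by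
  have hsh : 0 < Real.sinh μ := Real.sinh_pos_iff.2 hμ
  have hch : 0 < Real.cosh μ := Real.cosh_pos μ
  have hΛpos : 0 < Λ := by nlinarith
  have hf1pos : 0 < Real.cos s *
      (s * Real.sin s * Real.cosh μ + (Λ * t * Real.cosh μ + μ * Real.sinh μ) * Real.cos s) := by
    nlinarith [mul_pos hs0 hch, sq_nonneg (Real.cos s),
      mul_nonneg (mul_nonneg (mul_nonneg hΛpos.le ht) hch.le) (sq_nonneg (Real.cos s)),
      mul_pos hμ hsh]
  have hf1 : s * Real.sin s * Real.cosh μ +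
      (Λ * t * Real.cosh μ + μ * Real.sinh μ) * Real.cos s ≠ 0 := by
    intro h0
    rw [h0, mul_zero] at hf1pos
    exact lt_irrefl 0 hf1pos
  have hf2 : s * Real.cos s * Real.sinh μ -
      (Λ * t * Real.sinh μ + μ * Real.cosh μ) * Real.sin s = 0 :=
    (mul_eq_zero.1 he).resolve_left hf1
  have hid : -(Real.sin s * Real.sinh μ) *
      (-(s * (Real.cos s / Real.sin s)) + μ * (Real.cosh μ / Real.sinh μ) +
        (s ^ 2 + μ ^ 2) * t) =
      s * Real.cos s * Real.sinh μ - (Λ * t * Real.sinh μ + μ * Real.cosh μ) * Real.sin s := by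
    rw [hΛ]
    field_simp
    ring
  have h0 : -(Real.sin s * Real.sinh μ) *
      (-(s * (Real.cos s / Real.sin s)) + μ * (Real.cosh μ / Real.sinh μ) +
        (s ^ 2 + μ ^ 2) * t) = 0 := hid.trans hf2
  exact (mul_eq_zero.1 h0).resolve_left (neg_ne_zero.2 (mul_ne_zero hs hsh.ne'))

/-- The square root of `Λ - μ²` lies in the right interval. -/
lemma mem_S {μ Λ : ℝ} {p : ℕ}
    (h : Λ ∈ Set.Ioo (μ ^ 2 + π ^ 2 * (1 + (p : ℝ)) ^ 2 / 4)
      (μ ^ 2 + π ^ 2 * (2 + (p : ℝ)) ^ 2 / 4)) :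
    Real.sqrt (Λ - μ ^ 2) ∈ Set.Ioo ((1 + (p : ℝ)) * π / 2) ((2 + (p : ℝ)) * π / 2) ∧
      Real.sqrt (Λ - μ ^ 2) ^ 2 = Λ - μ ^ 2 := by
  have hπ := Real.pi_pos
  have hp0 : (0 : ℝ) ≤ p := Nat.cast_nonneg p
  have h1 : (0 : ℝ) < Λ - μ ^ 2 := by nlinarith [h.1]
  have hsq : Real.sqrt (Λ - μ ^ 2) ^ 2 = Λ - μ ^ 2 := Real.sq_sqrt h1.le
  refine ⟨⟨?_, ?_⟩, hsq⟩
  · rw [Real.lt_sqrt (by positivity)]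
    nlinarith [h.1]
  · rw [Real.sqrt_lt' (by positivity)]
    nlinarith [h.2]

end Stmt5Aux

open Stmt5Aux

set_option maxHeartbeats 1600000 in
/-- Monotonicity in β and comparison with the Dirichlet eigenvalue for the
non-constant-pressure eigenvalue branch: Λ₁ < Λ₂ < Λ^D. -/
theorem stmt_5 (μ : ℝ) (hμ : 0 < μ) (p : ℕ) (β₁ β₂ Λ₁ Λ₂ ΛD : ℝ)
    (hβ₁ : 0 < β₁) (hβ : β₁ < β₂)
    (hΛ₁ : Λ₁ ∈ Set.Ioo (μ ^ 2 + π ^ 2 * (1 + (p : ℝ)) ^ 2 / 4)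
      (μ ^ 2 + π ^ 2 * (2 + (p : ℝ)) ^ 2 / 4))
    (hΛ₂ : Λ₂ ∈ Set.Ioo (μ ^ 2 + π ^ 2 * (1 + (p : ℝ)) ^ 2 / 4)
      (μ ^ 2 + π ^ 2 * (2 + (p : ℝ)) ^ 2 / 4))
    (hΛD : ΛD ∈ Set.Ioo (μ ^ 2 + π ^ 2 * (1 + (p : ℝ)) ^ 2 / 4)
      (μ ^ 2 + π ^ 2 * (2 + (p : ℝ)) ^ 2 / 4))
    (he₁ : (β₁ * Real.sqrt (Λ₁ - μ ^ 2) * Real.sin (Real.sqrt (Λ₁ - μ ^ 2)) * Real.cosh μ +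
        (Λ₁ * Real.cosh μ + β₁ * μ * Real.sinh μ) * Real.cos (Real.sqrt (Λ₁ - μ ^ 2))) *
      (β₁ * Real.sqrt (Λ₁ - μ ^ 2) * Real.cos (Real.sqrt (Λ₁ - μ ^ 2)) * Real.sinh μ -
        (Λ₁ * Real.sinh μ + β₁ * μ * Real.cosh μ) * Real.sin (Real.sqrt (Λ₁ - μ ^ 2))) = 0)
    (he₂ : (β₂ * Real.sqrt (Λ₂ - μ ^ 2) * Real.sin (Real.sqrt (Λ₂ - μ ^ 2)) * Real.cosh μ +
        (Λ₂ * Real.cosh μ + β₂ * μ * Real.sinh μ) * Real.cos (Real.sqrt (Λ₂ - μ ^ 2))) *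
      (β₂ * Real.sqrt (Λ₂ - μ ^ 2) * Real.cos (Real.sqrt (Λ₂ - μ ^ 2)) * Real.sinh μ -
        (Λ₂ * Real.sinh μ + β₂ * μ * Real.cosh μ) * Real.sin (Real.sqrt (Λ₂ - μ ^ 2))) = 0)
    (heD : (Real.sqrt (ΛD - μ ^ 2) * Real.sin (Real.sqrt (ΛD - μ ^ 2)) * Real.cosh μ +
        μ * Real.sinh μ * Real.cos (Real.sqrt (ΛD - μ ^ 2))) *
      (Real.sqrt (ΛD - μ ^ 2) * Real.cos (Real.sqrt (ΛD - μ ^ 2)) * Real.sinh μ -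
        μ * Real.cosh μ * Real.sin (Real.sqrt (ΛD - μ ^ 2))) = 0) :
    Λ₁ < Λ₂ ∧ Λ₂ < ΛD := by
  have hπ := Real.pi_pos
  have hβ₂0 : 0 < β₂ := hβ₁.trans hβ
  obtain ⟨hmem₁, hsq₁⟩ := Stmt5Aux.mem_S hΛ₁
  obtain ⟨hmem₂, hsq₂⟩ := Stmt5Aux.mem_S hΛ₂
  obtain ⟨hmemD, hsqD⟩ := Stmt5Aux.mem_S hΛD
  set s₁ := Real.sqrt (Λ₁ - μ ^ 2) with hs₁def
  set s₂ := Real.sqrt (Λ₂ - μ ^ 2) with hs₂def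
  set sD := Real.sqrt (ΛD - μ ^ 2) with hsDdef
  have hs₁0 : 0 < s₁ := lt_trans (by positivity) hmem₁.1
  have hs₂0 : 0 < s₂ := lt_trans (by positivity) hmem₂.1
  have hsD0 : 0 < sD := lt_trans (by positivity) hmemD.1
  have hΛeq₁ : Λ₁ = s₁ ^ 2 + μ ^ 2 := by linarith [hsq₁]
  have hΛeq₂ : Λ₂ = s₂ ^ 2 + μ ^ 2 := by linarith [hsq₂]
  have hΛeqD : ΛD = sD ^ 2 + μ ^ 2 := by linarith [hsqD]
  -- rewrite the equations in "t-form"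
  have he₁' : (s₁ * Real.sin s₁ * Real.cosh μ +
        (Λ₁ * β₁⁻¹ * Real.cosh μ + μ * Real.sinh μ) * Real.cos s₁) *
      (s₁ * Real.cos s₁ * Real.sinh μ -
        (Λ₁ * β₁⁻¹ * Real.sinh μ + μ * Real.cosh μ) * Real.sin s₁) = 0 := by
    have hid : β₁ ^ 2 * ((s₁ * Real.sin s₁ * Real.cosh μ +
        (Λ₁ * β₁⁻¹ * Real.cosh μ + μ * Real.sinh μ) * Real.cos s₁) *
      (s₁ * Real.cos s₁ * Real.sinh μ -
        (Λ₁ * β₁⁻¹ * Real.sinh μ + μ * Real.cosh μ) * Real.sin s₁)) =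
        (β₁ * s₁ * Real.sin s₁ * Real.cosh μ +
          (Λ₁ * Real.cosh μ + β₁ * μ * Real.sinh μ) * Real.cos s₁) *
        (β₁ * s₁ * Real.cos s₁ * Real.sinh μ -
          (Λ₁ * Real.sinh μ + β₁ * μ * Real.cosh μ) * Real.sin s₁) := by
      field_simp
    have h0 := hid.trans he₁
    exact (mul_eq_zero.1 h0).resolve_left (pow_ne_zero 2 hβ₁.ne')
  have he₂' : (s₂ * Real.sin s₂ * Real.cosh μ +
        (Λ₂ * β₂⁻¹ * Real.cosh μ + μ * Real.sinh μ) * Real.cos s₂) *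
      (s₂ * Real.cos s₂ * Real.sinh μ -
        (Λ₂ * β₂⁻¹ * Real.sinh μ + μ * Real.cosh μ) * Real.sin s₂) = 0 := by
    have hid : β₂ ^ 2 * ((s₂ * Real.sin s₂ * Real.cosh μ +
        (Λ₂ * β₂⁻¹ * Real.cosh μ + μ * Real.sinh μ) * Real.cos s₂) *
      (s₂ * Real.cos s₂ * Real.sinh μ -
        (Λ₂ * β₂⁻¹ * Real.sinh μ + μ * Real.cosh μ) * Real.sin s₂)) =
        (β₂ * s₂ * Real.sin s₂ * Real.cosh μ +
          (Λ₂ * Real.cosh μ + β₂ * μ * Real.sinh μ) * Real.cos s₂) *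
        (β₂ * s₂ * Real.cos s₂ * Real.sinh μ -
          (Λ₂ * Real.sinh μ + β₂ * μ * Real.cosh μ) * Real.sin s₂) := by
      field_simp
    have h0 := hid.trans he₂
    exact (mul_eq_zero.1 h0).resolve_left (pow_ne_zero 2 hβ₂0.ne')
  have heD' : (sD * Real.sin sD * Real.cosh μ +
        (ΛD * 0 * Real.cosh μ + μ * Real.sinh μ) * Real.cos sD) *
      (sD * Real.cos sD * Real.sinh μ -
        (ΛD * 0 * Real.sinh μ + μ * Real.cosh μ) * Real.sin sD) = 0 := by
    have hid : (sD * Real.sin sD * Real.cosh μ +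
        (ΛD * 0 * Real.cosh μ + μ * Real.sinh μ) * Real.cos sD) *
      (sD * Real.cos sD * Real.sinh μ -
        (ΛD * 0 * Real.sinh μ + μ * Real.cosh μ) * Real.sin sD) =
        (sD * Real.sin sD * Real.cosh μ + μ * Real.sinh μ * Real.cos sD) *
        (sD * Real.cos sD * Real.sinh μ - μ * Real.cosh μ * Real.sin sD) := by ring
    rw [hid]
    exact heD
  have ht12 : β₂⁻¹ < β₁⁻¹ := by
    rw [inv_lt_inv₀ hβ₂0 hβ₁]
    exact hβ
  have ht₂0 : (0 : ℝ) < β₂⁻¹ := by positivity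
  rcases Nat.even_or_odd p with ⟨m, hm⟩ | ⟨m, hm⟩
  · -- even case: p = m + m
    have hp' : (p : ℝ) = 2 * m := by rw [hm]; push_cast; ring
    have hsc₁ : Real.sin s₁ * Real.cos s₁ < 0 :=
      sc_neg m (by rw [← hp']; exact hmem₁.1) (by rw [← hp']; exact hmem₁.2)
    have hsc₂ : Real.sin s₂ * Real.cos s₂ < 0 :=
      sc_neg m (by rw [← hp']; exact hmem₂.1) (by rw [← hp']; exact hmem₂.2)
    have hscD : Real.sin sD * Real.cos sD < 0 :=
      sc_neg m (by rw [← hp']; exact hmemD.1) (by rw [← hp']; exact hmemD.2)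
    have hc₁ := cos_ne p hmem₁.1 hmem₁.2
    have hc₂ := cos_ne p hmem₂.1 hmem₂.2
    have hcD := cos_ne p hmemD.1 hmemD.2
    have heq₁ := helperEven hμ hs₁0 hΛeq₁ (by positivity) hc₁ hsc₁ he₁'
    have heq₂ := helperEven hμ hs₂0 hΛeq₂ (by positivity) hc₂ hsc₂ he₂'
    have heqD := helperEven hμ hsD0 hΛeqD le_rfl hcD hscD heD'
    have h12 : s₁ < s₂ :=
      compare_aux (monoEven p) hmem₁ hmem₂ hs₁0 hs₂0 hμ ht12 ht₂0.le
        (by simpa using heq₁) (by simpa using heq₂)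
    have h2D : s₂ < sD :=
      compare_aux (monoEven p) hmem₂ hmemD hs₂0 hsD0 hμ ht₂0 le_rfl
        (by simpa using heq₂) (by simpa using heqD)
    constructor
    · rw [hΛeq₁, hΛeq₂]; nlinarith
    · rw [hΛeq₂, hΛeqD]; nlinarith
  · -- odd case: p = 2 * m + 1
    have hp' : (1 : ℝ) + (p : ℝ) = 2 + 2 * m := by rw [hm]; push_cast; ring
    have hp'' : (2 : ℝ) + (p : ℝ) = 3 + 2 * m := by rw [hm]; push_cast; ring
    have hsc₁ : 0 < Real.sin s₁ * Real.cos s₁ :=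
      sc_pos m (by rw [← hp']; exact hmem₁.1) (by rw [← hp'']; exact hmem₁.2)
    have hsc₂ : 0 < Real.sin s₂ * Real.cos s₂ :=
      sc_pos m (by rw [← hp']; exact hmem₂.1) (by rw [← hp'']; exact hmem₂.2)
    have hscD : 0 < Real.sin sD * Real.cos sD :=
      sc_pos m (by rw [← hp']; exact hmemD.1) (by rw [← hp'']; exact hmemD.2)
    have hs₁ne := sin_ne p hmem₁.1 hmem₁.2
    have hs₂ne := sin_ne p hmem₂.1 hmem₂.2
    have hsDne := sin_ne p hmemD.1 hmemD.2
    have heq₁ := helperOdd hμ hs₁0 hΛeq₁ (by positivity) hs₁ne hsc₁ he₁'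
    have heq₂ := helperOdd hμ hs₂0 hΛeq₂ (by positivity) hs₂ne hsc₂ he₂'
    have heqD := helperOdd hμ hsD0 hΛeqD le_rfl hsDne hscD heD'
    have h12 : s₁ < s₂ :=
      compare_aux (monoOdd p) hmem₁ hmem₂ hs₁0 hs₂0 hμ ht12 ht₂0.le
        (by simpa using heq₁) (by simpa using heq₂)
    have h2D : s₂ < sD :=
      compare_aux (monoOdd p) hmem₂ hmemD hs₂0 hsD0 hμ ht₂0 le_rfl
        (by simpa using heq₂) (by simpa using heqD)
    constructor
    · rw [hΛeq₁, hΛeq₂]; nlinarith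
    · rw [hΛeq₂, hΛeqD]; nlinarith
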